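/- Let m ≥ 2 and N ≥ 1 be integers, h = 1/N, ω > 0, and let C_0, …, C_N be real numbers satisfying ∑_{γ=0}^{N} C_γ sin(hωγ) = 0, ∑_{γ=0}^{N} C_γ cos(hωγ) = 0, and ∑_{γ=0}^{N} C_γ (hγ)^α = 0 for α = 0, 1, …, m−3. Then for every integer β ≤ 0: ∑_{γ=0}^{N} C_γ G_m(hβ − hγ) = −D₁ sin(hωβ) − D₂ cos(hωβ) − Q(hβ), where D₁ = ((−1)^m/(4ω^{2m−1})) ∑_{γ=0}^{N} C_γ (hωγ) sin(hωγ), D₂ = ((−1)^m/(4ω^{2m−1})) ∑_{γ=0}^{N} C_γ (hωγ) cos(hωγ), and Q(t) = ((−1)^m/(2ω^{2m−1})) ∑_{k=⌊m/2⌋}^{m−2} ∑_{α=m−2}^{2k−1} ((−1)^{k+α} (m−k−1) ω^{2k−1} / ((2k−1−α)! α!)) · t^{2k−1−α} · ∑_{γ=0}^{N} C_γ (hγ)^α, a polynomial of degree at most m−3 in t. -/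

import Mathlib

open Finset Real

noncomputable section

/-- The fundamental solution `G_m`. -/
def Gm (m : ℕ) (ω : ℝ) (x : ℝ) : ℝ :=
  (-1 : ℝ) ^ m * Real.sign x / (4 * ω ^ (2 * m - 1)) *
    ((2 * (m : ℝ) - 3) * Real.sin (ω * x) - ω * x * Real.cos (ω * x)
      + 2 * ∑ k ∈ Finset.Icc 1 (m - 2),
          (-1 : ℝ) ^ k * ((m : ℝ) - (k : ℝ) - 1) * (ω * x) ^ (2 * k - 1)
            / (Nat.factorial (2 * k - 1)))

end

/-- The bracket in `G_m`. -/
noncomputable def Fbr (m : ℕ) (ω x : ℝ) : ℝ :=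
  (2 * (m : ℝ) - 3) * Real.sin (ω * x) - ω * x * Real.cos (ω * x)
    + 2 * ∑ k ∈ Finset.Icc 1 (m - 2),
        (-1 : ℝ) ^ k * ((m : ℝ) - (k : ℝ) - 1) * (ω * x) ^ (2 * k - 1)
          / (Nat.factorial (2 * k - 1))

lemma Gm_eq_of_nonpos (m : ℕ) (ω x : ℝ) (hx : x ≤ 0) :
    Gm m ω x = -((-1 : ℝ) ^ m / (4 * ω ^ (2 * m - 1))) * Fbr m ω x := by
  rcases hx.lt_or_eq with hx' | rfl
  · rw [Gm, Fbr, Real.sign_of_neg hx']; ring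
  · have hz : ∑ k ∈ Finset.Icc 1 (m - 2),
        (-1 : ℝ) ^ k * ((m : ℝ) - (k : ℝ) - 1) * (ω * (0:ℝ)) ^ (2 * k - 1)
          / (Nat.factorial (2 * k - 1)) = 0 :=
      Finset.sum_eq_zero fun k hk => by
        have hk1 : 1 ≤ k := (Finset.mem_Icc.mp hk).1
        rw [mul_zero, zero_pow (by omega : 2 * k - 1 ≠ 0)]
        ring
    rw [Gm, Fbr, hz]
    simp

/-- For `β ≤ 0` the convolution `v(hβ) = ∑ C_γ G_m(hβ − hγ)` equals
`−D₁ sin(hωβ) − D₂ cos(hωβ) − Q(hβ)`. -/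
theorem convolution_left_of_nodes
    (m N : ℕ) (hm : 2 ≤ m) (hN : 1 ≤ N) (h ω : ℝ) (hh : h = 1 / N) (hω : 0 < ω)
    (Cc : ℕ → ℝ)
    (hsin : ∑ γ ∈ Finset.range (N + 1), Cc γ * Real.sin (h * ω * γ) = 0)
    (hcos : ∑ γ ∈ Finset.range (N + 1), Cc γ * Real.cos (h * ω * γ) = 0)
    (hpoly : ∀ α : ℕ, α + 3 ≤ m → ∑ γ ∈ Finset.range (N + 1), Cc γ * (h * γ) ^ α = 0)
    (D₁ D₂ : ℝ) (Q : ℝ → ℝ)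
    (hD1 : D₁ = (-1 : ℝ) ^ m / (4 * ω ^ (2 * m - 1)) *
        ∑ γ ∈ Finset.range (N + 1), Cc γ * (h * ω * γ) * Real.sin (h * ω * γ))
    (hD2 : D₂ = (-1 : ℝ) ^ m / (4 * ω ^ (2 * m - 1)) *
        ∑ γ ∈ Finset.range (N + 1), Cc γ * (h * ω * γ) * Real.cos (h * ω * γ))
    (hQ : ∀ t : ℝ, Q t = (-1 : ℝ) ^ m / (2 * ω ^ (2 * m - 1)) *
        ∑ k ∈ Finset.Icc (m / 2) (m - 2), ∑ α ∈ Finset.Icc (m - 2) (2 * k - 1),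
          (-1 : ℝ) ^ (k + α) * ((m : ℝ) - (k : ℝ) - 1) * ω ^ (2 * k - 1)
              / ((Nat.factorial (2 * k - 1 - α)) * (Nat.factorial α))
            * t ^ (2 * k - 1 - α)
            * ∑ γ ∈ Finset.range (N + 1), Cc γ * (h * γ) ^ α)
    :
    ∀ β : ℤ, β ≤ 0 →
      ∑ γ ∈ Finset.range (N + 1), Cc γ * Gm m ω (h * (β : ℝ) - h * γ)
        = -D₁ * Real.sin (h * ω * (β : ℝ)) - D₂ * Real.cos (h * ω * (β : ℝ)) - Q (h * (β : ℝ)) := by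
  intro β hβ
  have hN0 : (0:ℝ) < N := by exact_mod_cast Nat.pos_of_ne_zero (by omega)
  have hh0 : 0 < h := by rw [hh]; positivity
  have hβ0 : (β:ℝ) ≤ 0 := by exact_mod_cast hβ
  -- Step 1: replace Gm by -pref * Fbr
  have h1 : ∑ γ ∈ Finset.range (N + 1), Cc γ * Gm m ω (h * (β : ℝ) - h * γ)
      = -((-1 : ℝ) ^ m / (4 * ω ^ (2 * m - 1))) *
        ∑ γ ∈ Finset.range (N + 1), Cc γ * Fbr m ω (h * (β : ℝ) - h * γ) := by
    rw [Finset.mul_sum]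
    refine Finset.sum_congr rfl fun γ _ => ?_
    rw [Gm_eq_of_nonpos m ω _ ?_]
    · ring
    · have hb : h * (β:ℝ) ≤ 0 := mul_nonpos_iff.mpr (Or.inl ⟨hh0.le, hβ0⟩)
      have hg : 0 ≤ h * (γ:ℝ) := by positivity
      linarith
  -- sine part vanishes
  have hS1 : ∑ γ ∈ Finset.range (N + 1), Cc γ * Real.sin (ω * (h * (β:ℝ) - h * γ)) = 0 := by
    have e : ∀ γ ∈ Finset.range (N + 1), Cc γ * Real.sin (ω * (h * (β:ℝ) - h * γ))
        = Real.sin (h * ω * (β:ℝ)) * (Cc γ * Real.cos (h * ω * γ))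
          - Real.cos (h * ω * (β:ℝ)) * (Cc γ * Real.sin (h * ω * γ)) := by
      intro γ _
      rw [show ω * (h * (β:ℝ) - h * γ) = h * ω * (β:ℝ) - h * ω * γ by ring, Real.sin_sub]
      ring
    rw [Finset.sum_congr rfl e, Finset.sum_sub_distrib, ← Finset.mul_sum, ← Finset.mul_sum,
      hsin, hcos]
    ring
  -- cosine part
  have hS2 : ∑ γ ∈ Finset.range (N + 1),
        Cc γ * (ω * (h * (β:ℝ) - h * γ)) * Real.cos (ω * (h * (β:ℝ) - h * γ))
      = - Real.cos (h * ω * (β:ℝ)) *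
            (∑ γ ∈ Finset.range (N + 1), Cc γ * (h * ω * γ) * Real.cos (h * ω * γ))
        - Real.sin (h * ω * (β:ℝ)) *
            (∑ γ ∈ Finset.range (N + 1), Cc γ * (h * ω * γ) * Real.sin (h * ω * γ)) := by
    have e : ∀ γ ∈ Finset.range (N + 1),
        Cc γ * (ω * (h * (β:ℝ) - h * γ)) * Real.cos (ω * (h * (β:ℝ) - h * γ))
        = (h * ω * (β:ℝ)) * Real.cos (h * ω * (β:ℝ)) * (Cc γ * Real.cos (h * ω * γ))
          + (h * ω * (β:ℝ)) * Real.sin (h * ω * (β:ℝ)) * (Cc γ * Real.sin (h * ω * γ))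
          - Real.cos (h * ω * (β:ℝ)) * (Cc γ * (h * ω * γ) * Real.cos (h * ω * γ))
          - Real.sin (h * ω * (β:ℝ)) * (Cc γ * (h * ω * γ) * Real.sin (h * ω * γ)) := by
      intro γ _
      rw [show ω * (h * (β:ℝ) - h * γ) = h * ω * (β:ℝ) - h * ω * γ by ring, Real.cos_sub]
      ring
    rw [Finset.sum_congr rfl e]
    simp only [Finset.sum_sub_distrib, Finset.sum_add_distrib, ← Finset.mul_sum]
    rw [hsin, hcos]
    ring
  -- polynomial part
  have hS3 : ∑ γ ∈ Finset.range (N + 1), Cc γ *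
        (∑ k ∈ Finset.Icc 1 (m - 2),
          (-1 : ℝ) ^ k * ((m : ℝ) - (k : ℝ) - 1) * (ω * (h * (β:ℝ) - h * γ)) ^ (2 * k - 1)
            / (Nat.factorial (2 * k - 1)))
      = ∑ k ∈ Finset.Icc (m / 2) (m - 2), ∑ α ∈ Finset.Icc (m - 2) (2 * k - 1),
          (-1 : ℝ) ^ (k + α) * ((m : ℝ) - (k : ℝ) - 1) * ω ^ (2 * k - 1)
              / ((Nat.factorial (2 * k - 1 - α)) * (Nat.factorial α))
            * (h * (β:ℝ)) ^ (2 * k - 1 - α)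
            * ∑ γ ∈ Finset.range (N + 1), Cc γ * (h * γ) ^ α := by
    have step1 : ∀ γ ∈ Finset.range (N + 1), Cc γ *
        (∑ k ∈ Finset.Icc 1 (m - 2),
          (-1 : ℝ) ^ k * ((m : ℝ) - (k : ℝ) - 1) * (ω * (h * (β:ℝ) - h * γ)) ^ (2 * k - 1)
            / (Nat.factorial (2 * k - 1)))
        = ∑ k ∈ Finset.Icc 1 (m - 2), ∑ α ∈ Finset.range (2 * k - 1 + 1),
            Cc γ * ((-1 : ℝ) ^ k * ((m : ℝ) - (k : ℝ) - 1) / (Nat.factorial (2 * k - 1))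
              * ((-(ω * (h * γ))) ^ α * (h * ω * (β:ℝ)) ^ (2 * k - 1 - α)
                  * (Nat.choose (2 * k - 1) α : ℝ))) := by
      intro γ _
      rw [Finset.mul_sum]
      refine Finset.sum_congr rfl fun k _ => ?_
      rw [show ω * (h * (β:ℝ) - h * γ) = -(ω * (h * (γ:ℝ))) + h * ω * (β:ℝ) by ring,
        add_pow, Finset.mul_sum, Finset.sum_div, Finset.mul_sum]
      refine Finset.sum_congr rfl fun α _ => ?_
      ring
    rw [Finset.sum_congr rfl step1, Finset.sum_comm]
    have step2 : ∀ k ∈ Finset.Icc 1 (m - 2),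
        (∑ γ ∈ Finset.range (N + 1), ∑ α ∈ Finset.range (2 * k - 1 + 1),
            Cc γ * ((-1 : ℝ) ^ k * ((m : ℝ) - (k : ℝ) - 1) / (Nat.factorial (2 * k - 1))
              * ((-(ω * (h * γ))) ^ α * (h * ω * (β:ℝ)) ^ (2 * k - 1 - α)
                  * (Nat.choose (2 * k - 1) α : ℝ))))
        = ∑ α ∈ Finset.range (2 * k - 1 + 1),
            (-1 : ℝ) ^ (k + α) * ((m : ℝ) - (k : ℝ) - 1) * ω ^ (2 * k - 1)
                / ((Nat.factorial (2 * k - 1 - α)) * (Nat.factorial α))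
              * (h * (β:ℝ)) ^ (2 * k - 1 - α)
              * ∑ γ ∈ Finset.range (N + 1), Cc γ * (h * γ) ^ α := by
      intro k hk
      rw [Finset.sum_comm]
      refine Finset.sum_congr rfl fun α hα => ?_
      have hα' : α ≤ 2 * k - 1 := Nat.lt_succ_iff.mp (Finset.mem_range.mp hα)
      rw [Finset.mul_sum]
      refine Finset.sum_congr rfl fun γ _ => ?_
      have hfacN := Nat.choose_mul_factorial_mul_factorial hα'
      have hfac : ((Nat.choose (2 * k - 1) α : ℝ)) * (Nat.factorial α) *
          (Nat.factorial (2 * k - 1 - α)) = (Nat.factorial (2 * k - 1) : ℝ) := by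
        exact_mod_cast congrArg (fun n : ℕ => (n : ℝ)) hfacN
      have hωpow : ω ^ (2 * k - 1 - α) * ω ^ α = ω ^ (2 * k - 1) := by
        rw [← pow_add, Nat.sub_add_cancel hα']
      have h1' : (-(ω * (h * (γ:ℝ)))) ^ α = (-1 : ℝ) ^ α * (ω ^ α * (h * γ) ^ α) := by
        rw [neg_pow, mul_pow]
      have h2' : (h * ω * (β:ℝ)) ^ (2 * k - 1 - α)
          = ω ^ (2 * k - 1 - α) * (h * (β:ℝ)) ^ (2 * k - 1 - α) := by
        rw [show h * ω * (β:ℝ) = ω * (h * (β:ℝ)) by ring, mul_pow]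
      have h3' : (-1 : ℝ) ^ (k + α) = (-1 : ℝ) ^ k * (-1 : ℝ) ^ α := pow_add _ _ _
      have hf1 : (Nat.factorial (2 * k - 1) : ℝ) ≠ 0 := by
        exact_mod_cast (Nat.factorial_pos _).ne'
      have hf2 : (Nat.factorial (2 * k - 1 - α) : ℝ) ≠ 0 := by
        exact_mod_cast (Nat.factorial_pos _).ne'
      have hf3 : (Nat.factorial α : ℝ) ≠ 0 := by
        exact_mod_cast (Nat.factorial_pos _).ne'
      rw [h1', h2', h3', ← hωpow, ← hfac]
      have hc : (Nat.choose (2 * k - 1) α : ℝ) ≠ 0 := by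
        exact_mod_cast (Nat.choose_pos hα').ne'
      field_simp
    rw [Finset.sum_congr rfl step2]
    have step3 : ∀ k ∈ Finset.Icc 1 (m - 2),
        (∑ α ∈ Finset.range (2 * k - 1 + 1),
            (-1 : ℝ) ^ (k + α) * ((m : ℝ) - (k : ℝ) - 1) * ω ^ (2 * k - 1)
                / ((Nat.factorial (2 * k - 1 - α)) * (Nat.factorial α))
              * (h * (β:ℝ)) ^ (2 * k - 1 - α)
              * ∑ γ ∈ Finset.range (N + 1), Cc γ * (h * γ) ^ α)
        = ∑ α ∈ Finset.Icc (m - 2) (2 * k - 1),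
            (-1 : ℝ) ^ (k + α) * ((m : ℝ) - (k : ℝ) - 1) * ω ^ (2 * k - 1)
                / ((Nat.factorial (2 * k - 1 - α)) * (Nat.factorial α))
              * (h * (β:ℝ)) ^ (2 * k - 1 - α)
              * ∑ γ ∈ Finset.range (N + 1), Cc γ * (h * γ) ^ α := by
      intro k hk
      refine (Finset.sum_subset ?_ ?_).symm
      · intro α hα
        simp only [Finset.mem_Icc, Finset.mem_range] at *
        omega
      · intro α hα hα'
        simp only [Finset.mem_range, Finset.mem_Icc] at hα hα'
        have hα3 : α + 3 ≤ m := by omega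
        rw [hpoly α hα3, mul_zero]
    rw [Finset.sum_congr rfl step3]
    refine (Finset.sum_subset ?_ ?_).symm
    · intro k hk
      simp only [Finset.mem_Icc] at *
      omega
    · intro k hk hk'
      simp only [Finset.mem_Icc] at hk hk'
      rw [Finset.Icc_eq_empty (by omega), Finset.sum_empty]
  -- assemble
  have hKEY : ∑ γ ∈ Finset.range (N + 1), Cc γ * Fbr m ω (h * (β : ℝ) - h * γ)
      = (∑ γ ∈ Finset.range (N + 1), Cc γ * (h * ω * γ) * Real.sin (h * ω * γ))
          * Real.sin (h * ω * (β:ℝ))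
        + (∑ γ ∈ Finset.range (N + 1), Cc γ * (h * ω * γ) * Real.cos (h * ω * γ))
          * Real.cos (h * ω * (β:ℝ))
        + 2 * ∑ k ∈ Finset.Icc (m / 2) (m - 2), ∑ α ∈ Finset.Icc (m - 2) (2 * k - 1),
            (-1 : ℝ) ^ (k + α) * ((m : ℝ) - (k : ℝ) - 1) * ω ^ (2 * k - 1)
                / ((Nat.factorial (2 * k - 1 - α)) * (Nat.factorial α))
              * (h * (β:ℝ)) ^ (2 * k - 1 - α)
              * ∑ γ ∈ Finset.range (N + 1), Cc γ * (h * γ) ^ α := by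
    have expand : ∀ γ ∈ Finset.range (N + 1), Cc γ * Fbr m ω (h * (β : ℝ) - h * γ)
        = (2 * (m:ℝ) - 3) * (Cc γ * Real.sin (ω * (h * (β:ℝ) - h * γ)))
          - Cc γ * (ω * (h * (β:ℝ) - h * γ)) * Real.cos (ω * (h * (β:ℝ) - h * γ))
          + 2 * (Cc γ * ∑ k ∈ Finset.Icc 1 (m - 2),
              (-1 : ℝ) ^ k * ((m : ℝ) - (k : ℝ) - 1) * (ω * (h * (β:ℝ) - h * γ)) ^ (2 * k - 1)
                / (Nat.factorial (2 * k - 1))) := by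
      intro γ _
      rw [Fbr]
      ring
    rw [Finset.sum_congr rfl expand]
    simp only [Finset.sum_add_distrib, Finset.sum_sub_distrib, ← Finset.mul_sum]
    rw [hS1, hS2, hS3]
    ring
  rw [h1, hKEY, hD1, hD2, hQ (h * (β:ℝ))]
  ring
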